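/- Let μ be a Radon measure on [a, ∞), and let g : [a, ∞) → (0, ∞) be a convex function whose right derivative satisfies g'₊(x) = g'₊(a) + ∫_{(a, x]} g(y) dμ(y) for all x ≥ a. Define s_g(x) = ∫_a^x g(z)^{−2} dz. Then the product s_g·g has right derivative (s_g g)'₊(x) = 1/g(a) + ∫_{(a, x]} s_g(y) g(y) dμ(y) for all x ≥ a, and consequently s_g(x)g(x) = (x − a)/g(a) + ∫_{(a, x]} (x − y)·s_g(y)·g(y) dμ(y). -/

import Mathlib

open MeasureTheory Set intervalIntegral Filter Topology

set_option maxHeartbeats 1000000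

lemma aux_tendsto_measure_Ioc (μ : Measure ℝ) [IsLocallyFiniteMeasure μ] (x : ℝ) :
    Tendsto (fun t => (μ (Ioc x t)).toReal) (𝓝[>] x) (𝓝 0) := by
  have hfin : μ (Ioc x (x + 1)) ≠ ⊤ :=
    ((measure_mono Ioc_subset_Icc_self).trans_lt (isCompact_Icc.measure_lt_top)).ne
  have h1 : Tendsto (fun r => μ (Ioc x r)) (𝓝[>] x) (𝓝 (μ (⋂ r > x, Ioc x r))) :=
    tendsto_measure_biInter_gt (fun r _ => measurableSet_Ioc.nullMeasurableSet)
      (fun i j _ hij => Ioc_subset_Ioc_right hij) ⟨x + 1, by linarith, hfin⟩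
  have h2 : (⋂ r > x, Ioc x r) = (∅ : Set ℝ) := by
    ext y
    simp only [mem_iInter, mem_Ioc, mem_empty_iff_false, iff_false]
    intro hy
    have hxy : x < y := (hy (x + 1) (by linarith)).1
    have := (hy ((x + y) / 2) (by linarith)).2
    linarith
  rw [h2] at h1
  simp only [measure_empty] at h1
  simpa [Function.comp_def] using (ENNReal.tendsto_toReal (by simp)).comp h1

lemma aux_Phi_sub (μ : Measure ℝ) {a u v : ℝ} (hau : a ≤ u) (huv : u ≤ v) {φ ρ : ℝ → ℝ}
    (hρ : IntegrableOn ρ (Ioc a v) μ)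
    (hφρ : IntegrableOn (fun y => φ y * ρ y) (Ioc a v) μ) :
    (∫ y in Ioc a v, (φ v - φ y) * ρ y ∂μ) - ∫ y in Ioc a u, (φ u - φ y) * ρ y ∂μ
      = (φ v - φ u) * (∫ y in Ioc a u, ρ y ∂μ)
        + ∫ y in Ioc u v, (φ v - φ y) * ρ y ∂μ := by
  have hsub : Ioc a u ⊆ Ioc a v := Ioc_subset_Ioc_right huv
  have hint : ∀ c : ℝ, IntegrableOn (fun y => (φ c - φ y) * ρ y) (Ioc a v) μ := by
    intro c
    have : (fun y => (φ c - φ y) * ρ y) = fun y => φ c * ρ y - φ y * ρ y := by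
      funext y; ring
    rw [this]
    exact (hρ.const_mul (φ c)).sub hφρ
  have hsplit : (∫ y in Ioc a v, (φ v - φ y) * ρ y ∂μ)
      = (∫ y in Ioc a u, (φ v - φ y) * ρ y ∂μ) + ∫ y in Ioc u v, (φ v - φ y) * ρ y ∂μ := by
    rw [← setIntegral_union (Ioc_disjoint_Ioc_of_le le_rfl) measurableSet_Ioc
      ((hint v).mono_set hsub) ((hint v).mono_set (Ioc_subset_Ioc_left hau)),
      Ioc_union_Ioc_eq_Ioc hau huv]
  have hdiff : (∫ y in Ioc a u, (φ v - φ y) * ρ y ∂μ) - ∫ y in Ioc a u, (φ u - φ y) * ρ y ∂μ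
      = (φ v - φ u) * ∫ y in Ioc a u, ρ y ∂μ := by
    rw [← MeasureTheory.integral_const_mul, ← integral_sub ((hint v).mono_set hsub)
      ((hint u).mono_set hsub)]
    congr 1; funext y; ring
  linarith [hsplit, hdiff]

lemma aux_Phi_lip (μ : Measure ℝ) {a b L : ℝ} {φ ρ : ℝ → ℝ} (hL : 0 ≤ L)
    (hlip : ∀ u v, a ≤ u → u ≤ v → v ≤ b → |φ v - φ u| ≤ L * (v - u))
    (hρ : IntegrableOn ρ (Ioc a b) μ)
    (hφρ : IntegrableOn (fun y => φ y * ρ y) (Ioc a b) μ) :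
    ∀ u v, a ≤ u → u ≤ v → v ≤ b →
      |(∫ y in Ioc a v, (φ v - φ y) * ρ y ∂μ) - ∫ y in Ioc a u, (φ u - φ y) * ρ y ∂μ|
        ≤ (2 * L * ∫ y in Ioc a b, |ρ y| ∂μ) * (v - u) := by
  intro u v hau huv hvb
  set C : ℝ := ∫ y in Ioc a b, |ρ y| ∂μ with hC
  have hCnn : 0 ≤ C := setIntegral_nonneg measurableSet_Ioc fun y _ => abs_nonneg _
  have hρabs : IntegrableOn (fun y => |ρ y|) (Ioc a b) μ := hρ.abs
  have hsubv : Ioc a v ⊆ Ioc a b := Ioc_subset_Ioc_right hvb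
  have hkey := aux_Phi_sub μ hau huv (hρ.mono_set hsubv) (hφρ.mono_set hsubv)
  rw [hkey]
  have h1 : |(φ v - φ u) * ∫ y in Ioc a u, ρ y ∂μ| ≤ L * (v - u) * C := by
    rw [abs_mul]
    have hb1 : |∫ y in Ioc a u, ρ y ∂μ| ≤ C := by
      calc |∫ y in Ioc a u, ρ y ∂μ| ≤ ∫ y in Ioc a u, |ρ y| ∂μ := by
              simpa only [Real.norm_eq_abs] using
                norm_integral_le_integral_norm (μ := μ.restrict (Ioc a u)) ρ
        _ ≤ C := setIntegral_mono_set hρabs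
              (Eventually.of_forall fun y => abs_nonneg _)
              (HasSubset.Subset.eventuallyLE (Ioc_subset_Ioc_right (huv.trans hvb)))
    have hφb : |φ v - φ u| ≤ L * (v - u) := hlip u v hau huv hvb
    exact mul_le_mul hφb hb1 (abs_nonneg _) (mul_nonneg hL (by linarith))
  have h2 : |∫ y in Ioc u v, (φ v - φ y) * ρ y ∂μ| ≤ L * (v - u) * C := by
    have huvsub : Ioc u v ⊆ Ioc a b := Ioc_subset_Ioc hau hvb
    have hint0 : IntegrableOn (fun y => (φ v - φ y) * ρ y) (Ioc a b) μ := by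
      have heq : (fun y => (φ v - φ y) * ρ y) = fun y => φ v * ρ y - φ y * ρ y := by
        funext y; ring
      rw [heq]; exact (hρ.const_mul (φ v)).sub hφρ
    have hint1 : IntegrableOn (fun y => |(φ v - φ y) * ρ y|) (Ioc u v) μ :=
      (IntegrableOn.mono_set hint0 huvsub).abs
    have hint2 : IntegrableOn (fun y => L * (v - u) * |ρ y|) (Ioc u v) μ :=
      (IntegrableOn.mono_set hρabs huvsub).const_mul _
    calc |∫ y in Ioc u v, (φ v - φ y) * ρ y ∂μ|
        ≤ ∫ y in Ioc u v, |(φ v - φ y) * ρ y| ∂μ := by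
          simpa only [Real.norm_eq_abs] using
            norm_integral_le_integral_norm (μ := μ.restrict (Ioc u v))
              fun y => (φ v - φ y) * ρ y
      _ ≤ ∫ y in Ioc u v, L * (v - u) * |ρ y| ∂μ := by
          refine setIntegral_mono_on hint1 hint2 measurableSet_Ioc fun y hy => ?_
          rw [abs_mul]
          refine mul_le_mul ?_ le_rfl (abs_nonneg _) (mul_nonneg hL (by linarith))
          calc |φ v - φ y| ≤ L * (v - y) := hlip y v (hau.trans hy.1.le) hy.2 hvb
            _ ≤ L * (v - u) := mul_le_mul_of_nonneg_left (by linarith [hy.1]) hL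
      _ = L * (v - u) * ∫ y in Ioc u v, |ρ y| ∂μ := MeasureTheory.integral_const_mul _ _
      _ ≤ L * (v - u) * C :=
          mul_le_mul_of_nonneg_left
            (setIntegral_mono_set hρabs (Eventually.of_forall fun y => abs_nonneg _)
              (HasSubset.Subset.eventuallyLE huvsub)) (mul_nonneg hL (by linarith))
  calc |(φ v - φ u) * (∫ y in Ioc a u, ρ y ∂μ) + ∫ y in Ioc u v, (φ v - φ y) * ρ y ∂μ|
      ≤ |(φ v - φ u) * ∫ y in Ioc a u, ρ y ∂μ| + |∫ y in Ioc u v, (φ v - φ y) * ρ y ∂μ| :=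
        abs_add_le _ _
    _ ≤ L * (v - u) * C + L * (v - u) * C := add_le_add h1 h2
    _ = (2 * L * C) * (v - u) := by ring

lemma aux_Phi_hasDeriv (μ : Measure ℝ) [IsLocallyFiniteMeasure μ] {a x b L K φ' : ℝ}
    {φ ρ : ℝ → ℝ} (hax : a ≤ x) (hxb : x < b) (hL : 0 ≤ L) (hK : 0 ≤ K)
    (hφ : HasDerivWithinAt φ φ' (Ici x) x)
    (hlip : ∀ u v, x ≤ u → u ≤ v → v ≤ b → |φ v - φ u| ≤ L * (v - u))
    (hKb : ∀ y ∈ Ioc x b, |ρ y| ≤ K)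
    (hρ : IntegrableOn ρ (Ioc a b) μ)
    (hφρ : IntegrableOn (fun y => φ y * ρ y) (Ioc a b) μ) :
    HasDerivWithinAt (fun t => ∫ y in Ioc a t, (φ t - φ y) * ρ y ∂μ)
      (φ' * ∫ y in Ioc a x, ρ y ∂μ) (Ici x) x := by
  set M : ℝ := ∫ y in Ioc a x, ρ y ∂μ with hM
  rw [hasDerivWithinAt_iff_tendsto_slope, Ici_sdiff_left]
  set Φ : ℝ → ℝ := fun t => ∫ y in Ioc a t, (φ t - φ y) * ρ y ∂μ with hΦ
  have hslope : ∀ᶠ t in 𝓝[>] x, slope Φ x t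
      = slope φ x t * M + (∫ y in Ioc x t, (φ t - φ y) * ρ y ∂μ) / (t - x) := by
    filter_upwards [Ioo_mem_nhdsGT_of_mem (Set.left_mem_Ico.2 hxb)] with t ht
    have hxt : x ≤ t := ht.1.le
    have hsubt : Ioc a t ⊆ Ioc a b := Ioc_subset_Ioc_right ht.2.le
    have hkey' := aux_Phi_sub μ hax hxt (hρ.mono_set hsubt) (hφρ.mono_set hsubt)
    have hkey : Φ t - Φ x
        = (φ t - φ x) * M + ∫ y in Ioc x t, (φ t - φ y) * ρ y ∂μ := hkey'
    rw [slope_def_field, slope_def_field, hkey, add_div, div_mul_eq_mul_div]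
  have T1 : Tendsto (fun t => slope φ x t * M) (𝓝[>] x) (𝓝 (φ' * M)) := by
    have h := hasDerivWithinAt_iff_tendsto_slope.1 hφ
    rw [Ici_sdiff_left] at h
    exact h.mul_const M
  have T2 : Tendsto (fun t => (∫ y in Ioc x t, (φ t - φ y) * ρ y ∂μ) / (t - x))
      (𝓝[>] x) (𝓝 0) := by
    apply squeeze_zero_norm' (a := fun t => L * K * (μ (Ioc x t)).toReal)
    · filter_upwards [Ioo_mem_nhdsGT_of_mem (Set.left_mem_Ico.2 hxb)] with t ht
      have htx : 0 < t - x := by linarith [ht.1]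
      have hfin : μ (Ioc x t) < ⊤ :=
        ((measure_mono Ioc_subset_Icc_self).trans_lt isCompact_Icc.measure_lt_top)
      have hbound : ∀ y ∈ Ioc x t, ‖(φ t - φ y) * ρ y‖ ≤ L * (t - x) * K := by
        intro y hy
        rw [Real.norm_eq_abs, abs_mul]
        have h1 : |φ t - φ y| ≤ L * (t - x) := by
          calc |φ t - φ y| ≤ L * (t - y) := hlip y t hy.1.le hy.2 ht.2.le
            _ ≤ L * (t - x) := mul_le_mul_of_nonneg_left (by linarith [hy.1]) hL
        have h2 : |ρ y| ≤ K := hKb y ⟨hy.1, hy.2.trans ht.2.le⟩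
        exact mul_le_mul h1 h2 (abs_nonneg _) (by positivity)
      have h3 := norm_setIntegral_le_of_norm_le_const hfin hbound
      rw [Real.norm_eq_abs, abs_div, abs_of_pos htx]
      rw [div_le_iff₀ htx]
      calc |∫ y in Ioc x t, (φ t - φ y) * ρ y ∂μ|
          ≤ L * (t - x) * K * (μ (Ioc x t)).toReal := by
            simpa [Real.norm_eq_abs, measureReal_def] using h3
        _ = L * K * (μ (Ioc x t)).toReal * (t - x) := by ring
    · have := (aux_tendsto_measure_Ioc μ x).const_mul (L * K)
      simpa using this
  have := T1.add T2
  rw [add_zero] at this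
  exact Tendsto.congr' (hslope.mono fun t h => h.symm) this

lemma aux_continuousOn_Ici {f : ℝ → ℝ} {a : ℝ}
    (h : ∀ b, a < b → ∃ L, 0 ≤ L ∧ ∀ u v, a ≤ u → u ≤ v → v ≤ b → |f v - f u| ≤ L * (v - u)) :
    ContinuousOn f (Ici a) := by
  intro x hx
  obtain ⟨L, hL0, hL⟩ := h (x + 1) (by simp at hx; linarith)
  have hx' : a ≤ x := hx
  have hlips : LipschitzOnWith (Real.toNNReal L) f (Icc a (x + 1)) := by
    apply LipschitzOnWith.of_dist_le_mul
    intro p hp q hq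
    rw [Real.coe_toNNReal L hL0, Real.dist_eq, Real.dist_eq]
    rcases le_total p q with hpq | hqp
    · rw [abs_sub_comm (f p), abs_sub_comm p q, abs_of_nonneg (sub_nonneg.2 hpq)]
      exact hL p q hp.1 hpq hq.2
    · rw [abs_of_nonneg (sub_nonneg.2 hqp)]
      exact hL q p hq.1 hqp hp.2
  have hcw := hlips.continuousOn x ⟨hx', by linarith⟩
  refine hcw.mono_of_mem_nhdsWithin ?_
  rw [← Ici_inter_Iic]
  exact inter_mem_nhdsWithin _ (Iic_mem_nhds (by linarith))

lemma aux_core (μ : Measure ℝ) [IsLocallyFiniteMeasure μ] (a κ : ℝ)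
    (g s : ℝ → ℝ)
    (hpos : ∀ x ∈ Ici a, 0 < g x)
    (hder : ∀ x : ℝ, a ≤ x →
      HasDerivWithinAt g (κ + ∫ y in Ioc a x, g y ∂μ) (Ici x) x)
    (hg_cont : ContinuousOn g (Ici a))
    (hs_der : ∀ x, a ≤ x → HasDerivWithinAt s (((g x) ^ 2)⁻¹) (Ici x) x)
    (hs_a : s a = 0)
    (hs_cont : ContinuousOn s (Ici a))
    (hs_lip : ∀ b, a ≤ b → ∃ L, 0 ≤ L ∧
      ∀ u v, a ≤ u → u ≤ v → v ≤ b → |s v - s u| ≤ L * (v - u)) :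
    (∀ x : ℝ, a ≤ x →
      HasDerivWithinAt (fun t => s t * g t)
        (1 / g a + ∫ y in Ioc a x, s y * g y ∂μ)
        (Ici x) x) ∧
    (∀ x : ℝ, a ≤ x →
      s x * g x =
        (x - a) / g a
          + ∫ y in Ioc a x, (x - y) * (s y * g y) ∂μ) := by
  have hgne : ∀ x ∈ Ici a, g x ≠ 0 := fun x hx => (hpos x hx).ne'
  -- integrability w.r.t. μ
  have hgint : ∀ b, a ≤ b → IntegrableOn g (Ioc a b) μ := fun b hb =>
    ((hg_cont.mono (Icc_subset_Ici_self (a := b) (b := a))).integrableOn_compact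
      isCompact_Icc).mono_set Ioc_subset_Icc_self
  have hsgint : ∀ b, a ≤ b → IntegrableOn (fun y => s y * g y) (Ioc a b) μ := fun b hb =>
    (((hs_cont.mul hg_cont).mono (Icc_subset_Ici_self (a := b) (b := a))).integrableOn_compact
      isCompact_Icc).mono_set Ioc_subset_Icc_self
  have hysgint : ∀ b, a ≤ b → IntegrableOn (fun y => y * (s y * g y)) (Ioc a b) μ := fun b hb =>
    (((continuousOn_id.mul (hs_cont.mul hg_cont)).mono
      (Icc_subset_Ici_self (a := b) (b := a))).integrableOn_compact
      isCompact_Icc).mono_set Ioc_subset_Icc_self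
  -- the function ψ
  have hΦcont : ContinuousOn (fun x => ∫ y in Ioc a x, (s x - s y) * g y ∂μ) (Ici a) := by
    apply aux_continuousOn_Ici
    intro b hb
    obtain ⟨L, hL0, hLlip⟩ := hs_lip b hb.le
    refine ⟨2 * L * ∫ y in Ioc a b, |g y| ∂μ, ?_, ?_⟩
    · have : (0 : ℝ) ≤ ∫ y in Ioc a b, |g y| ∂μ :=
        setIntegral_nonneg measurableSet_Ioc fun y _ => abs_nonneg _
      positivity
    · exact aux_Phi_lip μ hL0 hLlip (hgint b hb.le) (hsgint b hb.le)
  have hψder : ∀ t, a ≤ t →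
      HasDerivWithinAt (fun x => (g x)⁻¹ + κ * s x
        + (∫ y in Ioc a x, (s x - s y) * g y ∂μ) - (g a)⁻¹) 0 (Ici t) t := by
    intro t ht
    obtain ⟨L, hL0, hLlip⟩ := hs_lip (t + 1) (by linarith)
    obtain ⟨K, hKbd⟩ := isCompact_Icc.exists_bound_of_continuousOn
      (hg_cont.mono (Icc_subset_Ici_self (a := t + 1) (b := a)))
    have hK0 : 0 ≤ K := le_trans (norm_nonneg _) (hKbd a (left_mem_Icc.2 (by linarith)))
    have hd3 : HasDerivWithinAt (fun u => ∫ y in Ioc a u, (s u - s y) * g y ∂μ)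
        (((g t) ^ 2)⁻¹ * ∫ y in Ioc a t, g y ∂μ) (Ici t) t := by
      refine aux_Phi_hasDeriv μ ht (by linarith : t < t + 1) hL0 hK0 (hs_der t ht)
        (fun u v hu huv hvb => hLlip u v (ht.trans hu) huv hvb) ?_
        (hgint (t + 1) (by linarith)) (hsgint (t + 1) (by linarith))
      intro y hy
      have := hKbd y ⟨ht.trans hy.1.le, hy.2⟩
      rwa [Real.norm_eq_abs] at this
    have hd1 : HasDerivWithinAt (fun u => (g u)⁻¹)
        (-(κ + ∫ y in Ioc a t, g y ∂μ) / (g t) ^ 2) (Ici t) t := (hder t ht).inv (hgne t ht)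
    have hd2 : HasDerivWithinAt (fun u => κ * s u) (κ * ((g t) ^ 2)⁻¹) (Ici t) t :=
      (hs_der t ht).const_mul κ
    have hsum := ((hd1.add hd2).add hd3).sub_const ((g a)⁻¹)
    refine hsum.congr_deriv ?_
    symm
    have hgt := hgne t ht
    field_simp
    ring
  have hψ0 : ∀ x, a ≤ x → (g x)⁻¹ + κ * s x
      + (∫ y in Ioc a x, (s x - s y) * g y ∂μ) - (g a)⁻¹ = 0 := by
    intro x hx
    have hψcont : ContinuousOn (fun x => (g x)⁻¹ + κ * s x
        + (∫ y in Ioc a x, (s x - s y) * g y ∂μ) - (g a)⁻¹) (Icc a x) := by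
      apply ContinuousOn.sub ?_ continuousOn_const
      refine ContinuousOn.add (ContinuousOn.add ?_ ?_) (hΦcont.mono Icc_subset_Ici_self)
      · exact ((hg_cont.inv₀ hgne).mono Icc_subset_Ici_self)
      · exact (continuousOn_const.mul (hs_cont.mono Icc_subset_Ici_self))
    have := constant_of_has_deriv_right_zero hψcont
      (fun t htx => hψder t htx.1) x (right_mem_Icc.2 hx)
    simpa [hs_a] using this
  have part1 : ∀ x, a ≤ x →
      HasDerivWithinAt (fun t => s t * g t)
        (1 / g a + ∫ y in Ioc a x, s y * g y ∂μ) (Ici x) x := by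
    intro x hx
    have hd := (hs_der x hx).mul (hder x hx)
    refine hd.congr_deriv ?_
    symm
    have hΦx : (∫ y in Ioc a x, (s x - s y) * g y ∂μ)
        = s x * (∫ y in Ioc a x, g y ∂μ) - ∫ y in Ioc a x, s y * g y ∂μ := by
      rw [← MeasureTheory.integral_const_mul,
        ← integral_sub ((hgint x hx).const_mul (s x)) (hsgint x hx)]
      congr 1; funext y; ring
    have h0 := hψ0 x hx
    rw [hΦx] at h0
    have hgx := hgne x hx
    have e1 : ((g x) ^ 2)⁻¹ * g x = (g x)⁻¹ := by
      rw [pow_two, mul_inv]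
      field_simp
    rw [e1, one_div]
    linear_combination -h0
  constructor
  · intro x hx
    exact part1 x hx
  · intro x hx
    -- second part
    have hΦ₂cont : ContinuousOn (fun t => ∫ y in Ioc a t, (t - y) * (s y * g y) ∂μ)
        (Ici a) := by
      apply aux_continuousOn_Ici
      intro b hb
      refine ⟨2 * 1 * ∫ y in Ioc a b, |s y * g y| ∂μ, ?_, ?_⟩
      · have : (0 : ℝ) ≤ ∫ y in Ioc a b, |s y * g y| ∂μ :=
          setIntegral_nonneg measurableSet_Ioc fun y _ => abs_nonneg _
        positivity
      · exact aux_Phi_lip (φ := fun w => w) μ zero_le_one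
          (fun u v hu huv hvb => by rw [abs_of_nonneg (by linarith), one_mul])
          (hsgint b hb.le) (hysgint b hb.le)
    have hχder : ∀ t, a ≤ t →
        HasDerivWithinAt (fun u => s u * g u
          - ((u - a) * (g a)⁻¹ + ∫ y in Ioc a u, (u - y) * (s y * g y) ∂μ)) 0 (Ici t) t := by
      intro t ht
      obtain ⟨K, hKbd⟩ := isCompact_Icc.exists_bound_of_continuousOn
        ((hs_cont.mul hg_cont).mono (Icc_subset_Ici_self (a := t + 1) (b := a)))
      have hK0 : 0 ≤ K := le_trans (norm_nonneg _) (hKbd a (left_mem_Icc.2 (by linarith)))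
      have hC : HasDerivWithinAt (fun u => ∫ y in Ioc a u, (u - y) * (s y * g y) ∂μ)
          (1 * ∫ y in Ioc a t, s y * g y ∂μ) (Ici t) t := by
        refine aux_Phi_hasDeriv (φ := fun w => w) μ ht (by linarith : t < t + 1)
          zero_le_one hK0 (hasDerivWithinAt_id t (Ici t))
          (fun u v hu huv hvb => by rw [abs_of_nonneg (by linarith), one_mul]) ?_
          (hsgint (t + 1) (by linarith)) (hysgint (t + 1) (by linarith))
        intro y hy
        have := hKbd y ⟨ht.trans hy.1.le, hy.2⟩
        rwa [Real.norm_eq_abs] at this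
      have hB : HasDerivWithinAt (fun u => (u - a) * (g a)⁻¹) (1 * (g a)⁻¹) (Ici t) t :=
        ((hasDerivWithinAt_id t (Ici t)).sub_const a).mul_const _
      have hsum := (part1 t ht).sub (hB.add hC)
      refine hsum.congr_deriv ?_
      symm
      rw [one_div]
      ring
    have hχcont : ContinuousOn (fun u => s u * g u
        - ((u - a) * (g a)⁻¹ + ∫ y in Ioc a u, (u - y) * (s y * g y) ∂μ)) (Icc a x) := by
      apply ContinuousOn.sub ((hs_cont.mul hg_cont).mono Icc_subset_Ici_self)
      apply ContinuousOn.add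
      · exact (continuousOn_id.sub continuousOn_const).mul continuousOn_const
      · exact hΦ₂cont.mono Icc_subset_Ici_self
    have hχx := constant_of_has_deriv_right_zero hχcont
      (fun t htx => hχder t htx.1) x (right_mem_Icc.2 hx)
    simp only [hs_a, sub_self, zero_mul, Ioc_self, Measure.restrict_empty,
      integral_zero_measure, add_zero, sub_zero, zero_add] at hχx
    -- hχx : s x * g x - ((x - a) * (g a)⁻¹ + ∫ ...) = 0
    rw [div_eq_mul_inv]
    linarith [hχx]

theorem stmt19 (μ : Measure ℝ) [IsLocallyFiniteMeasure μ] (a κ : ℝ)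
    (g : ℝ → ℝ) (hconv : ConvexOn ℝ (Ici a) g)
    (hpos : ∀ x ∈ Ici a, 0 < g x)
    (hdera : HasDerivWithinAt g κ (Ici a) a)
    (hder : ∀ x : ℝ, a ≤ x →
      HasDerivWithinAt g (κ + ∫ y in Ioc a x, g y ∂μ) (Ici x) x) :
    (∀ x : ℝ, a ≤ x →
      HasDerivWithinAt (fun t => (∫ z in a..t, ((g z) ^ 2)⁻¹) * g t)
        (1 / g a + ∫ y in Ioc a x, (∫ z in a..y, ((g z) ^ 2)⁻¹) * g y ∂μ)
        (Ici x) x) ∧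
    (∀ x : ℝ, a ≤ x →
      (∫ z in a..x, ((g z) ^ 2)⁻¹) * g x =
        (x - a) / g a
          + ∫ y in Ioc a x, (x - y) * (∫ z in a..y, ((g z) ^ 2)⁻¹) * g y ∂μ) := by
  have hgne : ∀ x ∈ Ici a, g x ≠ 0 := fun x hx => (hpos x hx).ne'
  have hg_cont : ContinuousOn g (Ici a) := by
    intro x hx
    rcases eq_or_lt_of_le (mem_Ici.mp hx) with rfl | hlt
    · exact hdera.continuousWithinAt
    · have h1 : ContinuousOn g (interior (Ici a)) := hconv.continuousOn_interior
      rw [interior_Ici] at h1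
      exact (h1.continuousAt (Ioi_mem_nhds hlt)).continuousWithinAt
  have hh_cont : ContinuousOn (fun z => ((g z) ^ 2)⁻¹) (Ici a) :=
    (hg_cont.pow 2).inv₀ fun x hx => pow_ne_zero 2 (hgne x hx)
  have hII : ∀ u v, a ≤ u → a ≤ v →
      IntervalIntegrable (fun z => ((g z) ^ 2)⁻¹) volume u v := by
    intro u v hu hv
    exact (hh_cont.mono fun z hz => le_trans (le_inf hu hv) hz.1).intervalIntegrable
  set s : ℝ → ℝ := fun t => ∫ z in a..t, ((g z) ^ 2)⁻¹ with hs_def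
  have hs_der : ∀ x, a ≤ x → HasDerivWithinAt s (((g x) ^ 2)⁻¹) (Ici x) x := by
    intro x hx
    have hIoi : Ioi x ⊆ Ici a := fun z hz => (hx.trans hz.le)
    exact intervalIntegral.integral_hasDerivWithinAt_right (hII a x le_rfl hx)
      ((hh_cont.mono hIoi).stronglyMeasurableAtFilter_nhdsWithin measurableSet_Ioi x)
      ((hh_cont x hx).mono hIoi)
  have hs_a : s a = 0 := integral_same
  have hs_sub : ∀ u v, a ≤ u → u ≤ v → s v - s u = ∫ z in u..v, ((g z) ^ 2)⁻¹ := by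
    intro u v hu huv
    have h := integral_add_adjacent_intervals (hII a u le_rfl hu)
      (hII u v hu (hu.trans huv))
    simp only [hs_def]
    linarith [h]
  have hs_lip : ∀ b, a ≤ b → ∃ L, 0 ≤ L ∧
      ∀ u v, a ≤ u → u ≤ v → v ≤ b → |s v - s u| ≤ L * (v - u) := by
    intro b hb
    obtain ⟨L, hL⟩ := isCompact_Icc.exists_bound_of_continuousOn
      (hh_cont.mono (Icc_subset_Ici_self (a := b) (b := a)))
    refine ⟨L, le_trans (norm_nonneg (((g a) ^ 2)⁻¹)) (hL a (left_mem_Icc.2 hb)), ?_⟩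
    intro u v hu huv hvb
    rw [hs_sub u v hu huv]
    have hbd : ∀ z ∈ uIoc u v, ‖((g z) ^ 2)⁻¹‖ ≤ L := by
      intro z hz
      rw [uIoc_of_le huv] at hz
      exact hL z ⟨hu.trans hz.1.le, hz.2.trans hvb⟩
    have h2 := intervalIntegral.norm_integral_le_of_norm_le_const hbd
    rw [Real.norm_eq_abs, abs_of_nonneg (sub_nonneg.2 huv)] at h2
    linarith [h2]
  have hs_cont : ContinuousOn s (Ici a) := by
    apply aux_continuousOn_Ici
    intro b hb
    exact hs_lip b hb.le
  obtain ⟨p1, p2⟩ := aux_core μ a κ g s hpos hder hg_cont hs_der hs_a hs_cont hs_lip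
  constructor
  · exact p1
  · intro x hx
    have := p2 x hx
    have hmul : (∫ y in Ioc a x, (x - y) * (∫ z in a..y, ((g z) ^ 2)⁻¹) * g y ∂μ)
        = ∫ y in Ioc a x, (x - y) * (s y * g y) ∂μ := by
      congr 1; funext y; rw [mul_assoc]
    rw [hmul]
    exact this
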